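/- Let Q be a rack and Λ an abelian group. The diagonal subcomplex of the Yang-Baxter cochain complex of c_Q with coefficients Λ is isomorphic, as a cochain complex, to the rack cochain complex of Q with coefficients Λ: under the identification of a diagonal matrix f with the map λ(x_1,...,x_n) = f[(x_1,...,x_n),(x_1,...,x_n)], the Yang-Baxter coboundary corresponds to the rack coboundary (δλ)(a_0,...,a_n) = Σ_{i=1}^n (−1)^i [λ(a_0,...,a_{i-1},a_{i+1},...,a_n) − λ(a_0^{a_i},...,a_{i-1}^{a_i},a_{i+1},...,a_n)]. -/

import Mathlib

open scoped Classical

variable {Q : Type*}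

/-- A rack: every right translation is a bijection, and self-distributivity holds. -/
def IsRack (op : Q → Q → Q) : Prop :=
  (∀ y : Q, Function.Bijective fun x => op x y) ∧
    ∀ a b c : Q, op (op a b) c = op (op a c) (op b c)

/-- Behavioural equivalence: `x ≡ y` iff `a ∗ x = a ∗ y` for all `a`. -/
def behEq (op : Q → Q → Q) (x y : Q) : Prop := ∀ a : Q, op a x = op a y

noncomputable section

variable {A : Type*} [CommRing A]

/-- The iterated action `x_i ^ (x_{i+1} ⋯ x_n)`. -/
def opChain (op : Q → Q → Q) {n : ℕ} (x : Fin (n + 1) → Q) (i : Fin (n + 1)) : Q :=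
  ((List.finRange (n + 1)).filter fun j => i < j).foldl (fun a j => op a (x j)) (x i)

/-- The partial Yang-Baxter coboundary `d_i^n`. -/
def dpart (op : Q → Q → Q) {n : ℕ} (i : Fin (n + 1))
    (f : (Fin n → Q) → (Fin n → Q) → A) :
    (Fin (n + 1) → Q) → (Fin (n + 1) → Q) → A := fun x y =>
  f (x ∘ i.succAbove) (y ∘ i.succAbove) *
      (if opChain op x i = opChain op y i then (1 : A) else 0) -
    f (fun j => if i.succAbove j < i then op (x (i.succAbove j)) (x i) else x (i.succAbove j))
      (fun j => if i.succAbove j < i then op (y (i.succAbove j)) (y i) else y (i.succAbove j)) *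
      (if x i = y i then (1 : A) else 0)

/-- The Yang-Baxter coboundary `d^n = Σ (-1)^i d_i^n`. -/
def dYB (op : Q → Q → Q) {n : ℕ} (f : (Fin n → Q) → (Fin n → Q) → A) :
    (Fin (n + 1) → Q) → (Fin (n + 1) → Q) → A := fun x y =>
  ∑ i : Fin (n + 1), (-1 : A) ^ (i : ℕ) * dpart op i f x y

end

noncomputable section
variable {Λ : Type*} [AddCommGroup Λ]

/-- Partial Yang-Baxter coboundary with coefficients in an abelian group `Λ`. -/
def dpartG (op : Q → Q → Q) {n : ℕ} (i : Fin (n + 1))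
    (f : (Fin n → Q) → (Fin n → Q) → Λ) :
    (Fin (n + 1) → Q) → (Fin (n + 1) → Q) → Λ := fun x y =>
  (if opChain op x i = opChain op y i then f (x ∘ i.succAbove) (y ∘ i.succAbove) else 0) -
    (if x i = y i then
      f (fun j => if i.succAbove j < i then op (x (i.succAbove j)) (x i) else x (i.succAbove j))
        (fun j => if i.succAbove j < i then op (y (i.succAbove j)) (y i) else y (i.succAbove j))
     else 0)

/-- Yang-Baxter coboundary with coefficients in an abelian group `Λ`. -/
def dYBG (op : Q → Q → Q) {n : ℕ} (f : (Fin n → Q) → (Fin n → Q) → Λ) :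
    (Fin (n + 1) → Q) → (Fin (n + 1) → Q) → Λ := fun x y =>
  ∑ i : Fin (n + 1), ((-1 : ℤ) ^ (i : ℕ)) • dpartG op i f x y

/-- The rack coboundary
`(δλ)(a_0,…,a_n) = Σ_{i=1}^n (−1)^i [λ(a_0,…,â_i,…,a_n) − λ(a_0^{a_i},…,a_{i-1}^{a_i},a_{i+1},…,a_n)]`. -/
def rackd (op : Q → Q → Q) {n : ℕ} (lam : (Fin n → Q) → Λ) :
    (Fin (n + 1) → Q) → Λ := fun a =>
  ∑ i : Fin (n + 1), if i = 0 then 0 else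
    ((-1 : ℤ) ^ (i : ℕ)) •
      (lam (a ∘ i.succAbove) -
        lam (fun j => if i.succAbove j < i then op (a (i.succAbove j)) (a i) else a (i.succAbove j)))

/-- A matrix is diagonal if its entries vanish whenever `x i ≠ y i` for some `i`. -/
def IsDiag {n : ℕ} (f : (Fin n → Q) → (Fin n → Q) → Λ) : Prop :=
  ∀ x y : Fin n → Q, (∃ i, x i ≠ y i) → f x y = 0

lemma foldl_inj_aux (op : Q → Q → Q) (hinj : ∀ y, Function.Injective fun x => op x y)
    (l : List Q) : ∀ {a b : Q}, l.foldl op a = l.foldl op b → a = b := by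
  induction l with
  | nil => intro a b h; exact h
  | cons c l ih => intro a b h; exact hinj c (ih h)

lemma opChain_inj (op : Q → Q → Q) (hinj : ∀ y, Function.Injective fun x => op x y)
    {n : ℕ} {x y : Fin (n + 1) → Q} (i : Fin (n + 1))
    (ht : ∀ k, i < k → x k = y k) (hc : opChain op x i = opChain op y i) : x i = y i := by
  unfold opChain at hc
  rw [← List.foldl_map (f := x) (g := op), ← List.foldl_map (f := y) (g := op)] at hc
  have hl : (((List.finRange (n + 1)).filter fun j => i < j).map x) =
      (((List.finRange (n + 1)).filter fun j => i < j).map y) := by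
    apply List.map_congr_left
    intro k hk
    exact ht k (by simpa using (List.mem_filter.mp hk).2)
  rw [hl] at hc
  exact foldl_inj_aux op hinj _ hc

/-- The diagonal subcomplex of the Yang-Baxter complex is isomorphic to the rack cochain
complex: for a diagonal cochain `f`, identified with `λ(x) = f[x,x]`, the Yang-Baxter
coboundary of `f` is again diagonal, and on the diagonal it equals the rack coboundary
of `λ`. -/
theorem diag_iso_rack (op : Q → Q → Q) (h : IsRack op) {n : ℕ}
    (f : (Fin n → Q) → (Fin n → Q) → Λ) (hf : IsDiag f) :
    IsDiag (dYBG op f) ∧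
      ∀ x : Fin (n + 1) → Q, dYBG op f x x = rackd op (fun z => f z z) x := by
  have hinj : ∀ y, Function.Injective fun x => op x y := fun y => (h.1 y).1
  constructor
  · rintro x y ⟨j, hj⟩
    apply Finset.sum_eq_zero
    intro i _
    suffices hd : dpartG op i f x y = 0 by rw [hd, smul_zero]
    unfold dpartG
    by_cases hij : i = j
    · subst hij
      rw [if_neg hj, sub_zero]
      by_cases hc : opChain op x i = opChain op y i
      · rw [if_pos hc]
        apply hf
        by_contra hall
        push_neg at hall
        apply hj
        refine opChain_inj op hinj i (fun k hk => ?_) hc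
        obtain ⟨m, hm⟩ := Fin.exists_succAbove_eq (ne_of_gt hk : k ≠ i)
        rw [← hm]; exact hall m
      · rw [if_neg hc]
    · have hji : j ≠ i := fun e => hij e.symm
      obtain ⟨k, rfl⟩ := Fin.exists_succAbove_eq hji
      have h1 : f (x ∘ i.succAbove) (y ∘ i.succAbove) = 0 := hf _ _ ⟨k, hj⟩
      rw [h1, ite_self, zero_sub, neg_eq_zero]
      by_cases hxy : x i = y i
      · rw [if_pos hxy]
        apply hf
        refine ⟨k, ?_⟩
        by_cases hlt : i.succAbove k < i
        · rw [if_pos hlt, if_pos hlt, hxy]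
          exact fun e => hj (hinj (y i) e)
        · rw [if_neg hlt, if_neg hlt]; exact hj
      · rw [if_neg hxy]
  · intro x
    unfold dYBG rackd dpartG
    apply Finset.sum_congr rfl
    intro i _
    by_cases hi : i = 0
    · subst hi
      rw [if_pos rfl]
      have : (fun j => if Fin.succAbove 0 j < (0 : Fin (n + 1)) then
          op (x (Fin.succAbove 0 j)) (x 0) else x (Fin.succAbove 0 j)) = x ∘ Fin.succAbove 0 := by
        funext j
        rw [if_neg (Fin.not_lt_zero _)]
        rfl
      rw [this]
      simp
    · rw [if_neg hi, if_pos rfl, if_pos rfl]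

end
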